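/- arXiv:1110.5589 — 2 statements merged into one kernel-verified Lean document; each statement's English description precedes it below -/
import Mathlib

section
/- Let η, χ, k_c, t be as follows: η : ℂ → ℝ with η(ξ) = 1 for |ξ| ≤ 1, η(ξ) = 0 for |ξ| ≥ 2, 0 ≤ η ≤ 1, χ(k) = η(t^{1/4}(k - k_c)), t ≥ 1. Then for every σ ∈ (1,∞), the function k ↦ (1 - χ(k)) / (16|k - k_c|²) restricted to the disc |k - k_c| ≤ 2 belongs to L^σ(ℂ) with norm at most C_σ t^{1/2 - 1/(2σ)}. -/
open MeasureTheory

lemma radial_bound (σ a : ℝ) (hσ : 1 < σ) (ha : 0 < a) (ha2 : a ≤ 2) :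
    (∫ y : ℂ, Set.indicator {y : ℂ | a ≤ ‖y‖ ∧ ‖y‖ ≤ 2} (fun y => ‖y‖ ^ (-(2*σ))) y)
      ≤ 2 * (volume (Metric.ball (0:ℂ) 1)).toReal * ((2*σ-2)⁻¹ * a ^ (2 - 2*σ)) := by
  have h1 : ∀ y : ℂ, Set.indicator {y : ℂ | a ≤ ‖y‖ ∧ ‖y‖ ≤ 2} (fun y => ‖y‖ ^ (-(2*σ))) y
      = (fun r : ℝ => Set.indicator (Set.Icc a 2) (fun r => r ^ (-(2*σ))) r) ‖y‖ := by
    intro y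
    simp only [Set.indicator_apply, Set.mem_setOf_eq, Set.mem_Icc]
  simp_rw [h1]
  rw [integral_fun_norm_addHaar (volume : Measure ℂ)
    (fun r : ℝ => Set.indicator (Set.Icc a 2) (fun r => r ^ (-(2*σ))) r)]
  rw [Complex.finrank_real_complex]
  have h2 : ∀ y : ℝ, y ^ (2 - 1) • Set.indicator (Set.Icc a 2) (fun r => r ^ (-(2*σ))) y
      = Set.indicator (Set.Icc a 2) (fun r : ℝ => r * r ^ (-(2*σ))) y := by
    intro y
    simp only [smul_eq_mul, Set.indicator_apply, Set.mem_Icc, mul_ite, mul_zero]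
    norm_num
  simp_rw [h2]
  rw [setIntegral_indicator measurableSet_Icc]
  have h3 : Set.Ioi (0:ℝ) ∩ Set.Icc a 2 = Set.Icc a 2 :=
    Set.inter_eq_right.2 (fun x hx => lt_of_lt_of_le ha hx.1)
  rw [h3]
  have h4 : ∀ y ∈ Set.Icc a 2, y * y ^ (-(2*σ)) = y ^ (1 - 2*σ) := by
    intro y hy
    have hy0 : 0 < y := lt_of_lt_of_le ha hy.1
    rw [show (1 : ℝ) - 2*σ = 1 + -(2*σ) by ring, Real.rpow_add hy0, Real.rpow_one]
  rw [setIntegral_congr_fun measurableSet_Icc h4]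
  rw [MeasureTheory.integral_Icc_eq_integral_Ioc, ← intervalIntegral.integral_of_le ha2]
  rw [integral_rpow (Or.inr ⟨by nlinarith, by
    rw [Set.uIcc_of_le ha2]; exact fun h => absurd h.1 (by linarith)⟩)]
  have hV : (0:ℝ) ≤ (volume (Metric.ball (0:ℂ) 1)).toReal := ENNReal.toReal_nonneg
  have key : (2 ^ (1 - 2*σ + 1) - a ^ (1 - 2*σ + 1)) / (1 - 2*σ + 1)
      ≤ (2*σ-2)⁻¹ * a ^ (2 - 2*σ) := by
    have h2p : (0:ℝ) < 2 ^ (1 - 2*σ + 1) := Real.rpow_pos_of_pos (by norm_num) _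
    have hap : (0:ℝ) < a ^ (1 - 2*σ + 1) := Real.rpow_pos_of_pos ha _
    have he : (1:ℝ) - 2*σ + 1 = 2 - 2*σ := by ring
    rw [he] at h2p hap ⊢
    have hinv : (0:ℝ) < (2*σ-2)⁻¹ := by rw [inv_pos]; linarith
    have hm : (2*σ-2) * (2*σ-2)⁻¹ = 1 := mul_inv_cancel₀ (by linarith)
    rw [div_le_iff_of_neg (by linarith : (2:ℝ) - 2*σ < 0)]
    nlinarith [hm, h2p, hap, mul_pos hap hinv]
  calc (2:ℕ) • (volume (Metric.ball (0:ℂ) 1)).toReal •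
        ((2 ^ (1 - 2*σ + 1) - a ^ (1 - 2*σ + 1)) / (1 - 2*σ + 1))
      = 2 * ((volume (Metric.ball (0:ℂ) 1)).toReal *
        ((2 ^ (1 - 2*σ + 1) - a ^ (1 - 2*σ + 1)) / (1 - 2*σ + 1))) := by
        simp [smul_eq_mul]
    _ ≤ 2 * ((volume (Metric.ball (0:ℂ) 1)).toReal * ((2*σ-2)⁻¹ * a ^ (2 - 2*σ))) := by
        apply mul_le_mul_of_nonneg_left (mul_le_mul_of_nonneg_left key hV) (by norm_num)
    _ = 2 * (volume (Metric.ball (0:ℂ) 1)).toReal * ((2*σ-2)⁻¹ * a ^ (2 - 2*σ)) := by ring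

/-- With `χ(k) = η(t^{1/4}(k-k_c))` as usual and `t ≥ 1`, for every `σ ∈ (1,∞)` the
function `k ↦ (1 - χ(k))/(16|k - k_c|²)` restricted to the disc `|k - k_c| ≤ 2`
lies in `L^σ(ℂ)` with norm at most `C_σ t^{1/2 - 1/(2σ)}`. -/
theorem stmt4 (σ : ℝ) (hσ : 1 < σ) :
    ∃ C : ℝ, 0 < C ∧ ∀ (η : ℂ → ℝ), Measurable η →
      (∀ ξ : ℂ, ‖ξ‖ ≤ 1 → η ξ = 1) → (∀ ξ : ℂ, 2 ≤ ‖ξ‖ → η ξ = 0) →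
      (∀ ξ : ℂ, 0 ≤ η ξ ∧ η ξ ≤ 1) →
      ∀ (kc : ℂ) (t : ℝ), 1 ≤ t →
        eLpNorm
            (Set.indicator {k : ℂ | ‖k - kc‖ ≤ 2}
              (fun k : ℂ =>
                (1 - η ((t ^ ((1 : ℝ) / 4)) • (k - kc))) / (16 * ‖k - kc‖ ^ 2)))
            (ENNReal.ofReal σ) volume
          ≤ ENNReal.ofReal (C * t ^ (1 / 2 - 1 / (2 * σ))) := by
  have hσ0 : (0:ℝ) < σ := by linarith
  set V : ℝ := (volume (Metric.ball (0:ℂ) 1)).toReal with hVdef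
  have hVpos : 0 < V := by
    refine ENNReal.toReal_pos ?_ measure_ball_lt_top.ne
    exact (Metric.measure_ball_pos volume (0:ℂ) one_pos).ne'
  have hinvpos : (0:ℝ) < (2*σ-2)⁻¹ := by rw [inv_pos]; linarith
  set K : ℝ := 2 * V * (2*σ-2)⁻¹ with hKdef
  have hKpos : 0 < K := by positivity
  refine ⟨K ^ (1/σ), Real.rpow_pos_of_pos hKpos _, ?_⟩
  intro η hηm hη1 hη0 hηb kc t ht
  have ht0 : (0:ℝ) < t := by linarith
  have htp : 0 < t ^ ((1:ℝ)/4) := Real.rpow_pos_of_pos ht0 _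
  set a : ℝ := (t ^ ((1:ℝ)/4))⁻¹ with hadef
  have hap : 0 < a := inv_pos.2 htp
  have ht1 : 1 ≤ t ^ ((1:ℝ)/4) := Real.one_le_rpow ht (by norm_num)
  have ha2 : a ≤ 2 := le_trans (inv_le_one_of_one_le₀ ht1) one_le_two
  set A : Set ℂ := {y : ℂ | a ≤ ‖y‖ ∧ ‖y‖ ≤ 2} with hAdef
  have hAm : MeasurableSet A := by
    have : A = {y : ℂ | a ≤ ‖y‖} ∩ {y : ℂ | ‖y‖ ≤ 2} := rfl
    rw [this]
    exact (measurableSet_le measurable_const measurable_norm).inter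
      (measurableSet_le measurable_norm measurable_const)
  set g : ℂ → ℝ := fun k => Set.indicator A (fun y : ℂ => ‖y‖ ^ (-(2:ℝ))) (k - kc) with hgdef
  have hg0 : ∀ k, 0 ≤ g k := fun k =>
    Set.indicator_nonneg (fun y _ => Real.rpow_nonneg (norm_nonneg _) _) _
  -- Step 1: pointwise domination
  have hpt : ∀ k : ℂ, ‖Set.indicator {k : ℂ | ‖k - kc‖ ≤ 2}
      (fun k : ℂ => (1 - η ((t ^ ((1 : ℝ) / 4)) • (k - kc))) / (16 * ‖k - kc‖ ^ 2)) k‖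
      ≤ ‖g k‖ := by
    intro k
    rw [Real.norm_of_nonneg (hg0 k)]
    by_cases hk2 : ‖k - kc‖ ≤ 2
    · rw [Set.indicator_of_mem (by exact hk2 : k ∈ {k : ℂ | ‖k - kc‖ ≤ 2})]
      by_cases hka : a ≤ ‖k - kc‖
      · have hmem : (k - kc) ∈ A := ⟨hka, hk2⟩
        have hgk : g k = ‖k - kc‖ ^ (-(2:ℝ)) := Set.indicator_of_mem hmem _
        rw [hgk]
        have hr : 0 < ‖k - kc‖ := lt_of_lt_of_le hap hka
        have hden : (0:ℝ) < 16 * ‖k - kc‖ ^ 2 := by positivity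
        rw [Real.norm_eq_abs, abs_div, abs_of_pos hden]
        have hnum : |1 - η ((t ^ ((1 : ℝ) / 4)) • (k - kc))| ≤ 1 := by
          have h1 := (hηb ((t ^ ((1 : ℝ) / 4)) • (k - kc))).1
          have h2 := (hηb ((t ^ ((1 : ℝ) / 4)) • (k - kc))).2
          rw [abs_le]; constructor <;> linarith
        calc |1 - η ((t ^ ((1 : ℝ) / 4)) • (k - kc))| / (16 * ‖k - kc‖ ^ 2)
            ≤ 1 / (16 * ‖k - kc‖ ^ 2) := by gcongr
          _ ≤ 1 / (‖k - kc‖ ^ 2) := by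
              apply div_le_div_of_nonneg_left one_pos.le (by positivity)
              nlinarith [sq_nonneg (‖k - kc‖)]
          _ = ‖k - kc‖ ^ (-(2:ℝ)) := by
              rw [Real.rpow_neg (norm_nonneg _), one_div,
                show ((2:ℝ)) = ((2:ℕ):ℝ) by norm_num, Real.rpow_natCast]
      · push_neg at hka
        have hsm : ‖(t ^ ((1 : ℝ) / 4)) • (k - kc)‖ ≤ 1 := by
          rw [norm_smul, Real.norm_eq_abs, abs_of_pos htp]
          have := mul_lt_mul_of_pos_left hka htp
          rw [mul_inv_cancel₀ htp.ne'] at this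
          exact this.le
        rw [hη1 _ hsm]
        simp [hg0 k]
    · rw [Set.indicator_of_notMem (by exact hk2 : k ∉ {k : ℂ | ‖k - kc‖ ≤ 2})]
      simpa using hg0 k
  refine le_trans (eLpNorm_mono hpt) ?_
  -- Step 2: compute the eLpNorm of g
  have hp0 : (ENNReal.ofReal σ) ≠ 0 := by
    simp only [ne_eq, ENNReal.ofReal_eq_zero, not_le]; linarith
  rw [eLpNorm_eq_lintegral_rpow_enorm_toReal hp0 ENNReal.ofReal_ne_top,
    ENNReal.toReal_ofReal hσ0.le]
  set h : ℂ → ℝ := fun y => Set.indicator A (fun y : ℂ => ‖y‖ ^ (-(2*σ))) y with hhdef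
  have hptw : ∀ x : ℂ, ‖g x‖ₑ ^ σ = ENNReal.ofReal (h (x - kc)) := by
    intro x
    rw [Real.enorm_eq_ofReal (hg0 x), ENNReal.ofReal_rpow_of_nonneg (hg0 x) hσ0.le]
    congr 1
    by_cases hx : (x - kc) ∈ A
    · simp only [hgdef, hhdef, Set.indicator_of_mem hx]
      rw [← Real.rpow_mul (norm_nonneg _)]
      norm_num
    · simp only [hgdef, hhdef, Set.indicator_of_notMem hx]
      exact Real.zero_rpow hσ0.ne'
  simp_rw [hptw]
  have htrans : (∫⁻ x : ℂ, ENNReal.ofReal (h (x - kc))) = ∫⁻ y : ℂ, ENNReal.ofReal (h y) :=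
    lintegral_sub_right_eq_self (fun y => ENNReal.ofReal (h y)) kc
  rw [htrans]
  -- integrability of h
  have hint : Integrable h volume := by
    refine Integrable.mono' ((integrable_indicator_iff measurableSet_closedBall).2
      ((integrableOn_const_iff).2 (Or.inr measure_closedBall_lt_top)) :
        Integrable (Set.indicator (Metric.closedBall (0:ℂ) 2) (fun _ => a ^ (-(2*σ)))) volume)
      ?_ ?_
    · refine (Measurable.indicator (by fun_prop) hAm).aestronglyMeasurable
    · refine Filter.Eventually.of_forall fun y => ?_
      by_cases hy : y ∈ A
      · rw [hhdef]
        simp only [Set.indicator_of_mem hy]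
        rw [Real.norm_of_nonneg (Real.rpow_nonneg (norm_nonneg _) _),
          Set.indicator_of_mem (by simpa [Metric.mem_closedBall, dist_zero_right] using hy.2)]
        exact Real.rpow_le_rpow_of_nonpos hap hy.1 (by linarith)
      · rw [hhdef]
        simp only [Set.indicator_of_notMem hy, norm_zero]
        exact Set.indicator_nonneg (fun _ _ => Real.rpow_nonneg hap.le _) _
  have hnn : 0 ≤ᵐ[volume] h :=
    Filter.Eventually.of_forall fun y =>
      Set.indicator_nonneg (fun z _ => Real.rpow_nonneg (norm_nonneg _) _) y
  rw [← ofReal_integral_eq_lintegral_ofReal hint hnn]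
  -- bound the integral
  have hIb : (∫ y : ℂ, h y) ≤ K * t ^ ((σ-1)/2) := by
    have := radial_bound σ a hσ hap ha2
    have haval : a ^ (2 - 2*σ) = t ^ ((σ-1)/2) := by
      rw [hadef, ← Real.rpow_neg ht0.le, ← Real.rpow_mul ht0.le]
      congr 1
      ring
    calc (∫ y : ℂ, h y) ≤ 2 * V * ((2*σ-2)⁻¹ * a ^ (2 - 2*σ)) := this
      _ = K * a ^ (2 - 2*σ) := by rw [hKdef]; ring
      _ = K * t ^ ((σ-1)/2) := by rw [haval]
  calc (ENNReal.ofReal (∫ y : ℂ, h y)) ^ (1/σ)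
      ≤ (ENNReal.ofReal (K * t ^ ((σ-1)/2))) ^ (1/σ) :=
        ENNReal.rpow_le_rpow (ENNReal.ofReal_le_ofReal hIb) (by positivity)
    _ = ENNReal.ofReal ((K * t ^ ((σ-1)/2)) ^ (1/σ)) :=
        ENNReal.ofReal_rpow_of_nonneg (by positivity) (by positivity)
    _ = ENNReal.ofReal (K ^ (1/σ) * t ^ (1/2 - 1/(2*σ))) := by
        congr 1
        rw [Real.mul_rpow hKpos.le (Real.rpow_nonneg ht0.le _),
          ← Real.rpow_mul ht0.le]
        congr 1
        field_simp
end

section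
/- In ℂ^{2n+1} with complex coordinates z₀,…,z_{2n}, define linear functionals ℓ_j : ℂ^{2n+1} → ℂ for 0 ≤ j ≤ 4n+1 by ℓ_j(z) = z_j for 0 ≤ j ≤ 2n, ℓ_j(z) = z_{j-2n} - z_{j-2n-1} for 2n < j ≤ 4n, and ℓ_{4n+1}(z) = Σ_{i=0}^{2n} (-1)^i z_i. Then with all exponents p_j = 2: (a) Σ_{j=0}^{4n+1} (1/2)·dim_ℂ ℓ_j(ℂ^{2n+1}) = 2n+1, and (b) for every complex subspace V of ℂ^{2n+1} with 0 < dim_ℂ V < 2n+1, one has Σ_{j=0}^{4n+1} (1/2)·dim_ℂ ℓ_j(V) > dim_ℂ V. -/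
open Module Finset
open scoped Classical

private lemma subC (W : Submodule ℂ ℂ) (h : W ≠ ⊥) : W = ⊤ := by
  rw [Submodule.ne_bot_iff] at h
  obtain ⟨x, hx, hx0⟩ := h
  rw [eq_top_iff]
  intro y _
  have : y = (y / x) • x := by rw [smul_eq_mul, div_mul_cancel₀ _ hx0]
  rw [this]; exact W.smul_mem _ hx

private lemma rank_map {m : ℕ} (f : (Fin m → ℂ) →ₗ[ℂ] ℂ) (V : Submodule ℂ (Fin m → ℂ)) :
    Module.finrank ℂ (Submodule.map f V) = if V ≤ LinearMap.ker f then 0 else 1 := by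
  split_ifs with h
  · have hb : Submodule.map f V = ⊥ := by
      rw [Submodule.eq_bot_iff]; rintro x ⟨v, hv, rfl⟩; exact h hv
    simp [hb]
  · have hne : Submodule.map f V ≠ ⊥ := by
      intro hb; apply h; intro v hv
      have hm : f v ∈ Submodule.map f V := ⟨v, hv, rfl⟩
      rw [hb] at hm; simpa using hm
    rw [subC _ hne]
    simp

private lemma count_le {m N : ℕ} (c : Fin N → ((Fin m → ℂ) →ₗ[ℂ] ℂ))
    (hc : ∀ v, (∀ k, c k v = 0) → v = 0) (V : Submodule ℂ (Fin m → ℂ)) :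
    Module.finrank ℂ V ≤ (Finset.univ.filter fun k => ¬ V ≤ LinearMap.ker (c k)).card := by
  set T := Finset.univ.filter fun k => ¬ V ≤ LinearMap.ker (c k) with hT
  let ψ : V →ₗ[ℂ] ({x // x ∈ T} → ℂ) := LinearMap.pi fun k => (c k.1).comp V.subtype
  have hinj : Function.Injective ψ := by
    intro v w hvw
    have hz : ∀ k : Fin N, c k (v : Fin m → ℂ) = c k (w : Fin m → ℂ) := by
      intro k
      by_cases hk : k ∈ T
      · exact congrFun hvw ⟨k, hk⟩
      · have : V ≤ LinearMap.ker (c k) := by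
          by_contra hcon
          exact hk (by simp [hT, hcon])
        have h1 := this v.2
        have h2 := this w.2
        rw [LinearMap.mem_ker] at h1 h2
        rw [h1, h2]
    have hvw0 : ((v : Fin m → ℂ) - w) = 0 := hc _ (fun k => by simp [hz k])
    exact Subtype.ext (sub_eq_zero.mp hvw0)
  have := LinearMap.finrank_le_finrank_of_injective hinj
  simpa [Module.finrank_fintype_fun_eq_card] using this

private lemma alt_sum (n : ℕ) : ∑ i ∈ Finset.range (2 * n + 1), (-1 : ℂ) ^ i = 1 := by
  induction n with
  | zero => simp
  | succ k ih =>
    have h : 2 * (k + 1) + 1 = (2 * k + 1) + 1 + 1 := by ring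
    rw [h, Finset.sum_range_succ, Finset.sum_range_succ, ih,
      Odd.neg_one_pow ⟨k, by ring⟩, Even.neg_one_pow ⟨k + 1, by ring⟩]
    ring

private lemma single_pair {N : ℕ} (s i j : Fin N)
    (h : (Pi.single s (1:ℂ) : Fin N → ℂ) i - (Pi.single s (1:ℂ) : Fin N → ℂ) j = 0) :
    (i = s ↔ j = s) := by
  by_cases hi : i = s <;> by_cases hj : j = s
  · simp [hi, hj]
  · subst hi; rw [Pi.single_eq_same, Pi.single_eq_of_ne hj] at h; norm_num at h
  · subst hj; rw [Pi.single_eq_same, Pi.single_eq_of_ne hi] at h; norm_num at h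
  · simp [hi, hj]

/-- Criticality/subcriticality (Bennett–Carbery–Christ–Tao) for the linear data of
Brown's multilinear form: with `ℓ_j(z) = z_j` (`0 ≤ j ≤ 2n`), `ℓ_j(z) = z_{j-2n} - z_{j-2n-1}`
(`2n < j ≤ 4n`), `ℓ_{4n+1}(z) = Σ (-1)^i z_i`, and all exponents `p_j = 2`:
(a) `Σ_j (1/2) dim ℓ_j(ℂ^{2n+1}) = 2n+1`, and (b) every nonzero proper complex
subspace `V` of `ℂ^{2n+1}` satisfies `dim V < Σ_j (1/2) dim ℓ_j(V)`. -/
theorem stmt10 (n : ℕ)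
    (l : Fin (4 * n + 2) → ((Fin (2 * n + 1) → ℂ) →ₗ[ℂ] ℂ))
    (h1 : ∀ (j : ℕ) (hj : j ≤ 2 * n) (z : Fin (2 * n + 1) → ℂ),
      l ⟨j, by omega⟩ z = z ⟨j, by omega⟩)
    (h2 : ∀ (j : ℕ) (hj1 : 2 * n < j) (hj2 : j ≤ 4 * n) (z : Fin (2 * n + 1) → ℂ),
      l ⟨j, by omega⟩ z = z ⟨j - 2 * n, by omega⟩ - z ⟨j - 2 * n - 1, by omega⟩)
    (h3 : ∀ z : Fin (2 * n + 1) → ℂ,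
      l ⟨4 * n + 1, by omega⟩ z = ∑ i : Fin (2 * n + 1), (-1 : ℂ) ^ (i : ℕ) * z i) :
    (∑ j : Fin (4 * n + 2),
        (Module.finrank ℂ (LinearMap.range (l j)) : ℚ) / 2 = 2 * n + 1) ∧
    (∀ V : Submodule ℂ (Fin (2 * n + 1) → ℂ),
      0 < Module.finrank ℂ V → Module.finrank ℂ V < 2 * n + 1 →
      (Module.finrank ℂ V : ℚ)
        < ∑ j : Fin (4 * n + 2), (Module.finrank ℂ (Submodule.map (l j) V) : ℚ) / 2) := by
  set a : Fin (2 * n + 1) → ((Fin (2 * n + 1) → ℂ) →ₗ[ℂ] ℂ) :=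
    fun k => l ⟨(k : ℕ), by omega⟩ with ha
  set b : Fin (2 * n + 1) → ((Fin (2 * n + 1) → ℂ) →ₗ[ℂ] ℂ) :=
    fun k => l ⟨2 * n + 1 + (k : ℕ), by omega⟩ with hb
  have haz : ∀ (k : Fin (2 * n + 1)) (z : Fin (2 * n + 1) → ℂ), a k z = z k := by
    intro k z
    have e := h1 (k : ℕ) (by omega) z
    simp only [Fin.eta] at e
    exact e
  have hbz : ∀ (k : Fin (2 * n + 1)) (hk : (k : ℕ) < 2 * n) (z : Fin (2 * n + 1) → ℂ),
      b k z = z ⟨(k : ℕ) + 1, by omega⟩ - z ⟨(k : ℕ), by omega⟩ := by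
    intro k hk z
    have e := h2 (2 * n + 1 + (k : ℕ)) (by omega) (by omega) z
    have e1 : (⟨2 * n + 1 + (k : ℕ) - 2 * n, by omega⟩ : Fin (2 * n + 1))
        = ⟨(k : ℕ) + 1, by omega⟩ := by ext; simp; omega
    have e2 : (⟨2 * n + 1 + (k : ℕ) - 2 * n - 1, by omega⟩ : Fin (2 * n + 1))
        = ⟨(k : ℕ), by omega⟩ := by ext; simp; omega
    rw [e1, e2] at e
    exact e
  have hblast : ∀ z : Fin (2 * n + 1) → ℂ,
      b ⟨2 * n, by omega⟩ z = ∑ i : Fin (2 * n + 1), (-1 : ℂ) ^ (i : ℕ) * z i := by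
    intro z
    have e := h3 z
    have e1 : (⟨4 * n + 1, by omega⟩ : Fin (4 * n + 2))
        = ⟨2 * n + 1 + (2 * n), by omega⟩ := by ext; simp; omega
    rw [e1] at e
    exact e
  have hcA : ∀ v : Fin (2 * n + 1) → ℂ, (∀ k, a k v = 0) → v = 0 := by
    intro v hv
    funext i
    have := hv i
    rw [haz] at this
    exact this
  have hcB : ∀ v : Fin (2 * n + 1) → ℂ, (∀ k, b k v = 0) → v = 0 := by
    intro v hv
    have hconst : ∀ (m : ℕ) (hm : m ≤ 2 * n), v ⟨m, by omega⟩ = v ⟨0, by omega⟩ := by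
      intro m
      induction m with
      | zero => intro _; rfl
      | succ p ih =>
        intro hm
        have hp := ih (by omega)
        have := hv ⟨p, by omega⟩
        rw [hbz ⟨p, by omega⟩ (by show p < 2 * n; omega)] at this
        have hsub : v ⟨p + 1, by omega⟩ = v ⟨p, by omega⟩ := by
          have := sub_eq_zero.mp this
          simpa using this
        rw [hsub]; exact hp
    have h0 : v ⟨0, by omega⟩ = 0 := by
      have e := hv ⟨2 * n, by omega⟩
      rw [hblast] at e
      have esum : ∑ i : Fin (2 * n + 1), (-1 : ℂ) ^ (i : ℕ) * v i
          = (∑ i : Fin (2 * n + 1), (-1 : ℂ) ^ (i : ℕ)) * v ⟨0, by omega⟩ := by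
        rw [Finset.sum_mul]
        refine Finset.sum_congr rfl fun i _ => ?_
        have : v i = v ⟨0, by omega⟩ := by
          have := hconst (i : ℕ) (by omega)
          simpa [Fin.eta] using this
        rw [this]
      rw [esum] at e
      have : (∑ i : Fin (2 * n + 1), (-1 : ℂ) ^ (i : ℕ)) = 1 := by
        rw [Fin.sum_univ_eq_sum_range (fun i => (-1 : ℂ) ^ i)]
        exact alt_sum n
      rw [this, one_mul] at e
      exact e
    funext i
    have := hconst (i : ℕ) (by omega)
    simp only [Fin.eta] at this
    rw [this, h0]; rfl
  refine ⟨?_, ?_⟩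
  · -- part (a)
    have hnz : ∀ j : Fin (4 * n + 2), ∃ z, l j z ≠ 0 := by
      intro j
      rcases lt_or_ge (j : ℕ) (2 * n + 1) with hj | hj
      · refine ⟨Pi.single ⟨j, hj⟩ 1, ?_⟩
        have e := h1 (j : ℕ) (by omega) (Pi.single ⟨j, hj⟩ 1)
        simp only [Fin.eta] at e
        rw [e]
        simp
      · rcases lt_or_ge (j : ℕ) (4 * n + 1) with hj2' | hj2'
        · refine ⟨Pi.single ⟨(j : ℕ) - 2 * n, by omega⟩ 1, ?_⟩
          have e := h2 (j : ℕ) (by omega) (by omega) (Pi.single ⟨(j : ℕ) - 2 * n, by omega⟩ 1)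
          simp only [Fin.eta] at e
          rw [e, Pi.single_eq_same, Pi.single_eq_of_ne]
          · norm_num
          · intro hcon
            have := congrArg Fin.val hcon
            simp at this
            omega
        · have hje : (⟨4 * n + 1, by omega⟩ : Fin (4 * n + 2)) = j := by
            ext; simp; omega
          refine ⟨Pi.single ⟨0, by omega⟩ 1, ?_⟩
          have e := h3 (Pi.single ⟨0, by omega⟩ 1)
          rw [hje] at e
          rw [e, Finset.sum_eq_single (⟨0, by omega⟩ : Fin (2 * n + 1))]
          · simp
          · intro b _ hb
            rw [Pi.single_eq_of_ne hb]; ring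
          · simp
    have hr : ∀ j : Fin (4 * n + 2), Module.finrank ℂ (LinearMap.range (l j)) = 1 := by
      intro j
      rw [LinearMap.range_eq_map, rank_map, if_neg]
      intro hcon
      obtain ⟨z, hz⟩ := hnz j
      exact hz (hcon (Submodule.mem_top))
    rw [Finset.sum_congr rfl (fun j _ => by rw [hr j])]
    simp [Finset.card_univ]
    ring
  · -- part (b)
    intro V hd0 hdN
    set d := Module.finrank ℂ V with hd
    set r : ℕ → ℕ := fun t =>
      if h : t < 4 * n + 2 then Module.finrank ℂ (Submodule.map (l ⟨t, h⟩) V) else 0 with hr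
    have hrj : ∀ j : Fin (4 * n + 2), Module.finrank ℂ (Submodule.map (l j) V) = r (j : ℕ) := by
      intro j
      simp only [hr, dif_pos j.isLt, Fin.eta]
    have hsum1 : ∑ j : Fin (4 * n + 2), (Module.finrank ℂ (Submodule.map (l j) V) : ℚ) / 2
        = ((∑ t ∈ Finset.range (4 * n + 2), r t : ℕ) : ℚ) / 2 := by
      rw [← Finset.sum_div]
      congr 1
      push_cast
      rw [← Fin.sum_univ_eq_sum_range (fun t => (r t : ℚ)) (4 * n + 2)]
      exact Finset.sum_congr rfl fun j _ => by rw [hrj j]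
    -- suffices to bound the natural sum
    suffices key : 2 * d + 1 ≤ ∑ t ∈ Finset.range (4 * n + 2), r t by
      rw [hsum1, lt_div_iff₀ (by norm_num : (0:ℚ) < 2)]
      have : ((2 * d + 1 : ℕ) : ℚ) ≤ ((∑ t ∈ Finset.range (4 * n + 2), r t : ℕ) : ℚ) :=
        Nat.cast_le.2 key
      push_cast at this ⊢
      linarith
    -- split the sum
    have hsplit : ∑ t ∈ Finset.range (4 * n + 2), r t
        = ∑ t ∈ Finset.range (2 * n + 1), r t
          + ∑ t ∈ Finset.range (2 * n + 1), r (2 * n + 1 + t) := by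
      have e2 : ∑ t ∈ Finset.range (2 * n + 1), r (2 * n + 1 + t)
          = ∑ i ∈ Finset.Ico (2 * n + 1) (4 * n + 2), r i := by
        rw [Finset.sum_Ico_eq_sum_range]
        have h42 : 4 * n + 2 - (2 * n + 1) = 2 * n + 1 := by omega
        rw [h42]
      rw [e2, Finset.range_eq_Ico,
        ← Finset.sum_Ico_consecutive r (by omega : 0 ≤ 2 * n + 1) (by omega : 2 * n + 1 ≤ 4 * n + 2), Finset.range_eq_Ico]
    -- TA
    have hAk : ∀ k : Fin (2 * n + 1), r (k : ℕ) = if V ≤ LinearMap.ker (a k) then 0 else 1 := by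
      intro k
      have h1 : ((k : ℕ)) < 4 * n + 2 := by omega
      simp only [hr, dif_pos h1]
      rw [ha]
      exact rank_map _ V
    have hBk : ∀ k : Fin (2 * n + 1),
        r (2 * n + 1 + (k : ℕ)) = if V ≤ LinearMap.ker (b k) then 0 else 1 := by
      intro k
      have h1 : 2 * n + 1 + (k : ℕ) < 4 * n + 2 := by omega
      simp only [hr, dif_pos h1]
      rw [hb]
      exact rank_map _ V
    have hTA_eq : ∑ t ∈ Finset.range (2 * n + 1), r t
        = (Finset.univ.filter fun k : Fin (2 * n + 1) => ¬ V ≤ LinearMap.ker (a k)).card := by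
      rw [Finset.card_filter, ← Fin.sum_univ_eq_sum_range r (2 * n + 1)]
      refine Finset.sum_congr rfl fun k _ => ?_
      rw [hAk k]
      rcases em (V ≤ LinearMap.ker (a k)) with h | h <;> simp [h]
    have hTB_eq : ∑ t ∈ Finset.range (2 * n + 1), r (2 * n + 1 + t)
        = (Finset.univ.filter fun k : Fin (2 * n + 1) => ¬ V ≤ LinearMap.ker (b k)).card := by
      rw [Finset.card_filter, ← Fin.sum_univ_eq_sum_range (fun t => r (2 * n + 1 + t)) (2 * n + 1)]
      refine Finset.sum_congr rfl fun k _ => ?_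
      rw [hBk k]
      rcases em (V ≤ LinearMap.ker (b k)) with h | h <;> simp [h]
    have hTA_ge : d ≤ ∑ t ∈ Finset.range (2 * n + 1), r t := by
      rw [hTA_eq]; exact count_le a hcA V
    have hTB_ge : d ≤ ∑ t ∈ Finset.range (2 * n + 1), r (2 * n + 1 + t) := by
      rw [hTB_eq]; exact count_le b hcB V
    by_cases hA : d + 1 ≤ ∑ t ∈ Finset.range (2 * n + 1), r t
    · omega
    · -- case TA = d
      have hTAd : ∑ t ∈ Finset.range (2 * n + 1), r t = d := by omega
      have hBk' : ∀ (t : ℕ) (ht : t < 2 * n + 1),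
          r (2 * n + 1 + t) = if V ≤ LinearMap.ker (b ⟨t, ht⟩) then 0 else 1 :=
        fun t ht => hBk ⟨t, ht⟩
      set S := Finset.univ.filter (fun k : Fin (2 * n + 1) => ¬ V ≤ LinearMap.ker (a k)) with hSdef
      have hScard : S.card = d := by rw [← hTA_eq]; exact hTAd
      set P : Submodule ℂ (Fin (2 * n + 1) → ℂ) :=
        ⨅ (k : Fin (2 * n + 1)) (_ : k ∉ S), LinearMap.ker (a k) with hPdef
      have hPmem : ∀ z, z ∈ P ↔ ∀ k ∉ S, z k = 0 := by
        intro z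
        simp only [hPdef, Submodule.mem_iInf, LinearMap.mem_ker]
        constructor
        · intro h k hk; rw [← haz k z]; exact h k hk
        · intro h k hk; rw [haz k z]; exact h k hk
      have hVP : V ≤ P := by
        refine le_iInf fun k => le_iInf fun hk => ?_
        have hnn : ¬¬ (V ≤ LinearMap.ker (a k)) := by
          intro hcon; exact hk (by simp [hSdef, hcon])
        exact not_not.mp hnn
      have hPle : Module.finrank ℂ P ≤ d := by
        refine (count_le a hcA P).trans ?_
        rw [← hScard]
        apply Finset.card_le_card
        intro k hk
        simp only [Finset.mem_filter, Finset.mem_univ, true_and] at hk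
        by_contra hkS
        exact hk (iInf_le_of_le k (iInf_le _ hkS))
      have hVPeq : V = P :=
        Submodule.eq_of_le_of_finrank_le hVP (hPle.trans (le_of_eq hd))
      have hSne : S.Nonempty := Finset.card_pos.mp (by rw [hScard]; exact hd0)
      obtain ⟨s0, hs0⟩ := hSne
      have hnotall : ∃ t0 : Fin (2 * n + 1), t0 ∉ S := by
        by_contra hall
        push_neg at hall
        have heq : S = Finset.univ := Finset.eq_univ_iff_forall.mpr hall
        rw [heq, Finset.card_univ] at hScard
        simp at hScard
        omega
      obtain ⟨t0, ht0⟩ := hnotall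
      have hsingle : ∀ s ∈ S, (Pi.single s (1:ℂ)) ∈ V := by
        intro s hs
        rw [hVPeq, hPmem]
        intro k hk
        exact Pi.single_eq_of_ne (fun hcon => hk (by rw [hcon]; exact hs)) 1
      -- last term is 1
      have hlast : r (2 * n + 1 + 2 * n) = 1 := by
        rw [hBk' (2 * n) (by omega), if_neg]
        intro hcon
        have hmem := hcon (hsingle s0 hs0)
        rw [LinearMap.mem_ker, hblast] at hmem
        rw [Finset.sum_eq_single s0] at hmem
        · rw [Pi.single_eq_same, mul_one] at hmem
          exact pow_ne_zero (s0 : ℕ) (by norm_num : (-1:ℂ) ≠ 0) hmem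
        · intro i _ hne
          rw [Pi.single_eq_of_ne hne]; ring
        · intro hcon2; exact absurd (Finset.mem_univ s0) hcon2
      -- front sum at least d
      have hfront : d ≤ ∑ t ∈ Finset.range (2 * n), r (2 * n + 1 + t) := by
        set φ : Fin (2 * n + 1) → ℕ :=
          fun s => if (s : ℕ) < (t0 : ℕ) then (s : ℕ) else (s : ℕ) - 1 with hφ
        set T' := (Finset.range (2 * n)).filter (fun t => 1 ≤ r (2 * n + 1 + t)) with hT'
        have hgood : ∀ (t : ℕ) (ht : t < 2 * n) (s : Fin (2 * n + 1)), s ∈ S →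
            ((s : ℕ) = t ∨ (s : ℕ) = t + 1) → 1 ≤ r (2 * n + 1 + t) := by
          intro t ht s hs hst
          have htt : t < 2 * n + 1 := by omega
          rw [hBk' t htt]
          rw [if_neg]
          intro hcon
          have hmem := hcon (hsingle s hs)
          rw [LinearMap.mem_ker, hbz ⟨t, htt⟩ (by show t < 2 * n; omega)] at hmem
          have hiff := single_pair s _ _ hmem
          have hiff' : (t + 1 = (s : ℕ) ↔ t = (s : ℕ)) := by
            simpa [Fin.ext_iff] using hiff
          omega
        have hsub : ∀ s ∈ S, φ s ∈ T' := by
          intro s hs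
          have hs_ne : s ≠ t0 := fun h => ht0 (h ▸ hs)
          have hs_ne' : (s : ℕ) ≠ (t0 : ℕ) := fun h => hs_ne (Fin.ext h)
          have hslt : (s : ℕ) < 2 * n + 1 := s.isLt
          have ht0lt : (t0 : ℕ) < 2 * n + 1 := t0.isLt
          rw [hT', Finset.mem_filter, Finset.mem_range]
          by_cases hc : (s : ℕ) < (t0 : ℕ)
          · have hφs : φ s = (s : ℕ) := by rw [hφ]; simp [hc]
            rw [hφs]
            exact ⟨by omega, hgood (s : ℕ) (by omega) s hs (Or.inl rfl)⟩
          · have hφs : φ s = (s : ℕ) - 1 := by rw [hφ]; simp [hc]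
            rw [hφs]
            have h1 : 1 ≤ (s : ℕ) := by omega
            refine ⟨by omega, hgood ((s : ℕ) - 1) (by omega) s hs (Or.inr (by omega))⟩
        have hinj : Set.InjOn φ S := by
          intro s1 hs1 s2 hs2 heq
          have hs1' : s1 ∈ S := hs1
          have hs2' : s2 ∈ S := hs2
          have h1 : s1 ≠ t0 := by rintro rfl; exact ht0 hs1'
          have h2 : s2 ≠ t0 := by rintro rfl; exact ht0 hs2'
          have h1' : (s1 : ℕ) ≠ (t0 : ℕ) := fun h => h1 (Fin.ext h)
          have h2' : (s2 : ℕ) ≠ (t0 : ℕ) := fun h => h2 (Fin.ext h)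
          rw [hφ] at heq
          apply Fin.ext
          by_cases c1 : (s1 : ℕ) < (t0 : ℕ) <;> by_cases c2 : (s2 : ℕ) < (t0 : ℕ) <;>
            simp [c1, c2] at heq <;> omega
        have hcard1 : S.card ≤ T'.card := Finset.card_le_card_of_injOn φ hsub hinj
        have hcard2 : T'.card ≤ ∑ t ∈ Finset.range (2 * n), r (2 * n + 1 + t) := by
          rw [hT', Finset.card_filter]
          refine Finset.sum_le_sum fun t _ => ?_
          split_ifs with h
          · exact h
          · exact Nat.zero_le _
        omega
      have hTBsucc : ∑ t ∈ Finset.range (2 * n + 1), r (2 * n + 1 + t)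
          = ∑ t ∈ Finset.range (2 * n), r (2 * n + 1 + t) + r (2 * n + 1 + 2 * n) :=
        Finset.sum_range_succ _ _
      omega
end
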